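/- arXiv:1604.00124 — 5 statements merged into one kernel-verified Lean document; each statement's English description precedes it below -/
import Mathlib

section
/- Let r, s, c₁, c₂, c₃ be real numbers and let ρ be the 4×4 matrix (1/4)·[[1+r+s+c₃, 0, 0, c₁−c₂], [0, 1+r−s−c₃, c₁+c₂, 0], [0, c₁+c₂, 1−r+s−c₃, 0], [c₁−c₂, 0, 0, 1−r−s+c₃]], viewed as a complex Hermitian matrix. Then ρ is positive semidefinite if and only if 1−c₃ ≥ √((r−s)²+(c₁+c₂)²) and 1+c₃ ≥ √((r+s)²+(c₁−c₂)²). -/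
open scoped ComplexOrder
open Matrix

lemma quad_aux (a c d x1 x2 y1 y2 : ℝ) (ha : 0 ≤ a) (hd : 0 ≤ d) (hc : c^2 ≤ a*d) :
    0 ≤ a*(x1^2+x2^2) + d*(y1^2+y2^2) + 2*c*(x1*y1+x2*y2) := by
  have hT : (x1*y1+x2*y2)^2 ≤ (x1^2+x2^2)*(y1^2+y2^2) := by
    nlinarith [sq_nonneg (x1*y2 - x2*y1)]
  have hS : 0 ≤ a*(x1^2+x2^2) + d*(y1^2+y2^2) := by positivity
  have h2 : (2*c*(x1*y1+x2*y2))^2 ≤ (a*(x1^2+x2^2) + d*(y1^2+y2^2))^2 := by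
    nlinarith [sq_nonneg (a*(x1^2+x2^2) - d*(y1^2+y2^2)),
      mul_nonneg (sub_nonneg.2 hc) (sq_nonneg (x1*y1+x2*y2)),
      mul_nonneg (mul_nonneg ha hd) (sub_nonneg.2 hT)]
  nlinarith [h2, hS]

set_option maxHeartbeats 1000000 in
theorem xstate_posSemidef_iff (r s c₁ c₂ c₃ : ℝ)
    (ρ : Matrix (Fin 4) (Fin 4) ℂ)
    (hρ : ρ = (1/4 : ℂ) •
      !![((1+r+s+c₃ : ℝ) : ℂ), 0, 0, ((c₁-c₂ : ℝ) : ℂ);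
         0, ((1+r-s-c₃ : ℝ) : ℂ), ((c₁+c₂ : ℝ) : ℂ), 0;
         0, ((c₁+c₂ : ℝ) : ℂ), ((1-r+s-c₃ : ℝ) : ℂ), 0;
         ((c₁-c₂ : ℝ) : ℂ), 0, 0, ((1-r-s+c₃ : ℝ) : ℂ)]) :
    ρ.PosSemidef ↔
      (Real.sqrt ((r-s)^2 + (c₁+c₂)^2) ≤ 1 - c₃ ∧
       Real.sqrt ((r+s)^2 + (c₁-c₂)^2) ≤ 1 + c₃) := by
  subst hρ
  rw [Matrix.posSemidef_iff_dotProduct_mulVec]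
  constructor
  · rintro ⟨-, hq⟩
    -- outer block (indices 0,3)
    have h1 : ∀ t u : ℝ, 0 ≤ (1+r+s+c₃)*t^2 + 2*(c₁-c₂)*(t*u) + (1-r-s+c₃)*u^2 := by
      intro t u
      have := hq ![(t:ℂ),0,0,(u:ℂ)]
      rw [show star ![(t:ℂ),0,0,(u:ℂ)] ⬝ᵥ Matrix.mulVec _ ![(t:ℂ),0,0,(u:ℂ)]
          = ((((1+r+s+c₃)*t^2 + 2*(c₁-c₂)*(t*u) + (1-r-s+c₃)*u^2)/4 : ℝ) : ℂ) from by
        simp [dotProduct, Matrix.mulVec, Fin.sum_univ_four]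
        ring] at this
      rw [Complex.zero_le_real] at this
      linarith
    -- inner block (indices 1,2)
    have h2 : ∀ t u : ℝ, 0 ≤ (1+r-s-c₃)*t^2 + 2*(c₁+c₂)*(t*u) + (1-r+s-c₃)*u^2 := by
      intro t u
      have := hq ![0,(t:ℂ),(u:ℂ),0]
      rw [show star ![0,(t:ℂ),(u:ℂ),0] ⬝ᵥ Matrix.mulVec _ ![0,(t:ℂ),(u:ℂ),0]
          = ((((1+r-s-c₃)*t^2 + 2*(c₁+c₂)*(t*u) + (1-r+s-c₃)*u^2)/4 : ℝ) : ℂ) from by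
        simp [dotProduct, Matrix.mulVec, Fin.sum_univ_four]
        ring] at this
      rw [Complex.zero_le_real] at this
      linarith
    have hA : 0 ≤ 1+r+s+c₃ := by have := h1 1 0; linarith
    have hD : 0 ≤ 1-r-s+c₃ := by have := h1 0 1; linarith
    have hB : 0 ≤ 1+r-s-c₃ := by have := h2 1 0; linarith
    have hE : 0 ≤ 1-r+s-c₃ := by have := h2 0 1; linarith
    have hd1 : discrim (1+r+s+c₃) (2*(c₁-c₂)) (1-r-s+c₃) ≤ 0 :=
      discrim_le_zero (fun t => by have := h1 t 1; nlinarith)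
    have hd2 : discrim (1+r-s-c₃) (2*(c₁+c₂)) (1-r+s-c₃) ≤ 0 :=
      discrim_le_zero (fun t => by have := h2 t 1; nlinarith)
    rw [discrim] at hd1 hd2
    exact ⟨Real.sqrt_le_iff.mpr ⟨by linarith, by nlinarith⟩,
           Real.sqrt_le_iff.mpr ⟨by linarith, by nlinarith⟩⟩
  · rintro ⟨h1, h2⟩
    obtain ⟨hp1, hs1⟩ := Real.sqrt_le_iff.mp h1
    obtain ⟨hp2, hs2⟩ := Real.sqrt_le_iff.mp h2
    have hA : 0 ≤ 1+r+s+c₃ := by nlinarith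
    have hD : 0 ≤ 1-r-s+c₃ := by nlinarith
    have hB : 0 ≤ 1+r-s-c₃ := by nlinarith
    have hE : 0 ≤ 1-r+s-c₃ := by nlinarith
    have hC : (c₁-c₂)^2 ≤ (1+r+s+c₃)*(1-r-s+c₃) := by nlinarith
    have hC' : (c₁+c₂)^2 ≤ (1+r-s-c₃)*(1-r+s-c₃) := by nlinarith
    constructor
    · ext i j
      fin_cases i <;> fin_cases j <;>
        simp [Matrix.conjTranspose_apply, Complex.conj_ofReal]
    · intro x
      have e : star x ⬝ᵥ (((1/4 : ℂ) •
        !![((1+r+s+c₃ : ℝ) : ℂ), 0, 0, ((c₁-c₂ : ℝ) : ℂ);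
           0, ((1+r-s-c₃ : ℝ) : ℂ), ((c₁+c₂ : ℝ) : ℂ), 0;
           0, ((c₁+c₂ : ℝ) : ℂ), ((1-r+s-c₃ : ℝ) : ℂ), 0;
           ((c₁-c₂ : ℝ) : ℂ), 0, 0, ((1-r-s+c₃ : ℝ) : ℂ)]).mulVec x)
        = ((1/4 : ℝ) : ℂ) *
          (((1+r+s+c₃ : ℝ) : ℂ) * ((starRingEnd ℂ) (x 0) * x 0)
           + ((c₁-c₂ : ℝ) : ℂ) * ((starRingEnd ℂ) (x 0) * x 3)
           + ((c₁-c₂ : ℝ) : ℂ) * ((starRingEnd ℂ) (x 3) * x 0)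
           + ((1-r-s+c₃ : ℝ) : ℂ) * ((starRingEnd ℂ) (x 3) * x 3)
           + ((1+r-s-c₃ : ℝ) : ℂ) * ((starRingEnd ℂ) (x 1) * x 1)
           + ((c₁+c₂ : ℝ) : ℂ) * ((starRingEnd ℂ) (x 1) * x 2)
           + ((c₁+c₂ : ℝ) : ℂ) * ((starRingEnd ℂ) (x 2) * x 1)
           + ((1-r+s-c₃ : ℝ) : ℂ) * ((starRingEnd ℂ) (x 2) * x 2)) := by
        simp [dotProduct, Matrix.mulVec, Fin.sum_univ_four]
        ring
      rw [e, Complex.le_def]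
      constructor
      · simp only [Complex.add_re, Complex.mul_re, Complex.mul_im, Complex.ofReal_re,
          Complex.ofReal_im, Complex.zero_re, Complex.conj_re, Complex.conj_im]
        nlinarith [quad_aux (1+r+s+c₃) (c₁-c₂) (1-r-s+c₃) (x 0).re (x 0).im (x 3).re (x 3).im hA hD hC,
          quad_aux (1+r-s-c₃) (c₁+c₂) (1-r+s-c₃) (x 1).re (x 1).im (x 2).re (x 2).im hB hE hC']
      · simp only [Complex.add_re, Complex.add_im, Complex.mul_re, Complex.mul_im,
          Complex.ofReal_re, Complex.ofReal_im, Complex.zero_im, Complex.conj_re,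
          Complex.conj_im]
        ring
end

section
/- Let r, s, c₁, c₂, c₃ be real numbers satisfying 1−c₃ ≥ √((r−s)²+(c₁+c₂)²) and 1+c₃ ≥ √((r+s)²+(c₁−c₂)²). Then for all real z₁, z₂, z₃ with z₁²+z₂²+z₃² = 1, both r² + 2rc₃z₃ + (c₁z₁)² + (c₂z₂)² + (c₃z₃)² ≤ (1+sz₃)² and r² − 2rc₃z₃ + (c₁z₁)² + (c₂z₂)² + (c₃z₃)² ≤ (1−sz₃)². In particular, r² + max(c₁², c₂²) ≤ 1. -/
lemma amgm' (a b c : ℝ) (ha : 0 ≤ a) (hb : 0 ≤ b) (hc : 0 ≤ c) (h : c^2 ≤ a*b) :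
    2*c ≤ a + b := by
  nlinarith [sq_nonneg (a - b), sq_nonneg (a + b - 2*c)]

lemma main_ineq (α β γ δ P Q x u v : ℝ) (hα : 0 ≤ α) (hβ : 0 ≤ β) (hγ : 0 ≤ γ) (hδ : 0 ≤ δ)
    (hQ : Q^2 ≤ α*δ) (hP : P^2 ≤ β*γ) :
    x^2*((P+Q)^2*u^2 + (P-Q)^2*v^2) ≤ (α*x^2+β*(u^2+v^2))*(γ*x^2+δ*(u^2+v^2)) := by
  have hwnn : (0:ℝ) ≤ u^2+v^2 := by positivity
  have hc : 2*(abs (P*Q)*x^2*(u^2+v^2)) ≤ α*γ*x^4 + β*δ*(u^2+v^2)^2 := by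
    apply amgm' _ _ _ (by positivity) (by positivity) (by positivity)
    have h1 : (P*Q)^2 ≤ (α*δ)*(β*γ) := by
      calc (P*Q)^2 = Q^2 * P^2 := by ring
      _ ≤ (α*δ)*(β*γ) := mul_le_mul hQ hP (sq_nonneg P) (by positivity)
    have habs : (abs (P*Q)*x^2*(u^2+v^2))^2 = (P*Q)^2*x^4*(u^2+v^2)^2 := by
      rw [mul_pow, mul_pow, sq_abs]; ring
    rw [habs]
    nlinarith [mul_nonneg (mul_nonneg (sq_nonneg (x^2)) (sq_nonneg (u^2+v^2))) (sub_nonneg.2 h1)]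
  have habs2 : P*Q*(u^2-v^2) ≤ abs (P*Q)*(u^2+v^2) := by
    calc P*Q*(u^2-v^2) ≤ |P*Q*(u^2-v^2)| := le_abs_self _
    _ = abs (P*Q) * |u^2-v^2| := abs_mul _ _
    _ ≤ abs (P*Q) * (u^2+v^2) := by
        apply mul_le_mul_of_nonneg_left _ (abs_nonneg _)
        rw [abs_le]; constructor <;> nlinarith [sq_nonneg u, sq_nonneg v]
  have F3 : 2*(x^2*(P*Q*(u^2-v^2))) ≤ 2*(x^2*(abs (P*Q)*(u^2+v^2))) := by
    apply mul_le_mul_of_nonneg_left _ (by norm_num)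
    exact mul_le_mul_of_nonneg_left habs2 (sq_nonneg x)
  nlinarith [mul_nonneg (mul_nonneg (sq_nonneg x) hwnn) (sub_nonneg.2 hQ),
    mul_nonneg (mul_nonneg (sq_nonneg x) hwnn) (sub_nonneg.2 hP), F3, hc]

set_option maxHeartbeats 1600000 in
theorem post_measurement_eigenvalue_bounds (r s c₁ c₂ c₃ : ℝ)
    (h1 : Real.sqrt ((r-s)^2 + (c₁+c₂)^2) ≤ 1 - c₃)
    (h2 : Real.sqrt ((r+s)^2 + (c₁-c₂)^2) ≤ 1 + c₃) :
    (∀ z₁ z₂ z₃ : ℝ, z₁^2 + z₂^2 + z₃^2 = 1 →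
      r^2 + 2*r*c₃*z₃ + (c₁*z₁)^2 + (c₂*z₂)^2 + (c₃*z₃)^2 ≤ (1 + s*z₃)^2 ∧
      r^2 - 2*r*c₃*z₃ + (c₁*z₁)^2 + (c₂*z₂)^2 + (c₃*z₃)^2 ≤ (1 - s*z₃)^2) ∧
    r^2 + max (c₁^2) (c₂^2) ≤ 1 := by
  have hs1 : (0:ℝ) ≤ 1 - c₃ := le_trans (Real.sqrt_nonneg _) h1
  have hs2 : (0:ℝ) ≤ 1 + c₃ := le_trans (Real.sqrt_nonneg _) h2
  have a1 : (r-s)^2 + (c₁+c₂)^2 ≤ (1-c₃)^2 := by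
    have := Real.sq_sqrt (by positivity : (0:ℝ) ≤ (r-s)^2 + (c₁+c₂)^2)
    nlinarith [Real.sqrt_nonneg ((r-s)^2 + (c₁+c₂)^2)]
  have a2 : (r+s)^2 + (c₁-c₂)^2 ≤ (1+c₃)^2 := by
    have := Real.sq_sqrt (by positivity : (0:ℝ) ≤ (r+s)^2 + (c₁-c₂)^2)
    nlinarith [Real.sqrt_nonneg ((r+s)^2 + (c₁-c₂)^2)]
  -- linear facts
  have hα : (0:ℝ) ≤ 1+r+s+c₃ := by nlinarith [sq_nonneg (c₁-c₂)]
  have hδ : (0:ℝ) ≤ 1-r-s+c₃ := by nlinarith [sq_nonneg (c₁-c₂)]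
  have hβ : (0:ℝ) ≤ 1+r-s-c₃ := by nlinarith [sq_nonneg (c₁+c₂)]
  have hγ : (0:ℝ) ≤ 1-r+s-c₃ := by nlinarith [sq_nonneg (c₁+c₂)]
  have hQ : (c₁-c₂)^2 ≤ (1+r+s+c₃)*(1-r-s+c₃) := by nlinarith
  have hP : (c₁+c₂)^2 ≤ (1+r-s-c₃)*(1-r+s-c₃) := by nlinarith
  have key : ∀ z₁ z₂ z₃ : ℝ, z₁^2 + z₂^2 + z₃^2 = 1 →
      r^2 + 2*r*c₃*z₃ + (c₁*z₁)^2 + (c₂*z₂)^2 + (c₃*z₃)^2 ≤ (1 + s*z₃)^2 := by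
    intro z₁ z₂ z₃ hz
    have hz3a : -1 ≤ z₃ := by nlinarith [sq_nonneg z₁, sq_nonneg z₂, sq_nonneg (z₃+1)]
    by_cases hz3 : z₃ = -1
    · subst hz3
      have hz1 : z₁ = 0 := by nlinarith [sq_nonneg z₁, sq_nonneg z₂]
      have hz2 : z₂ = 0 := by nlinarith [sq_nonneg z₁, sq_nonneg z₂]
      subst hz1; subst hz2
      nlinarith [mul_nonneg hδ hβ]
    · have hz3b : -1 < z₃ := lt_of_le_of_ne hz3a (Ne.symm hz3)
      set x := Real.sqrt ((1+z₃)/2) with hxdef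
      have hx2 : x^2 = (1+z₃)/2 := Real.sq_sqrt (by linarith)
      have hxpos : 0 < x := Real.sqrt_pos.2 (by linarith)
      set u := z₁/(2*x) with hudef
      set v := z₂/(2*x) with hvdef
      have hu : 2*x*u = z₁ := by rw [hudef]; field_simp
      have hv : 2*x*v = z₂ := by rw [hvdef]; field_simp
      have huv : u^2+v^2 = (1-z₃)/2 := by
        have h4 : (2*x)^2*(u^2+v^2) = z₁^2+z₂^2 := by
          rw [hudef, hvdef]; field_simp
          try ring
        have h5 : (2*x)^2 = 2*(1+z₃) := by rw [mul_pow, hx2]; ring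
        have h6 : z₁^2+z₂^2 = (1+z₃)*(1-z₃) := by nlinarith
        rw [h5, h6] at h4
        have h7 : (0:ℝ) < 1+z₃ := by linarith
        field_simp
        nlinarith [h4]
      have main := main_ineq (1+r+s+c₃) (1+r-s-c₃) (1-r+s-c₃) (1-r-s+c₃)
        (c₁+c₂) (c₁-c₂) x u v hα hβ hγ hδ
        (by nlinarith) (by nlinarith)
      have e1 : x^2*(((c₁+c₂)+(c₁-c₂))^2*u^2 + ((c₁+c₂)-(c₁-c₂))^2*v^2)
          = (c₁*z₁)^2 + (c₂*z₂)^2 := by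
        rw [← hu, ← hv]; ring
      have e2 : ((1+r+s+c₃)*x^2+(1+r-s-c₃)*(u^2+v^2))*((1-r+s-c₃)*x^2+(1-r-s+c₃)*(u^2+v^2))
          = (1+s*z₃)^2 - (r^2+2*r*c₃*z₃+(c₃*z₃)^2) := by
        rw [hx2, huv]; ring
      rw [e1, e2] at main
      linarith
  refine ⟨fun z₁ z₂ z₃ hz => ⟨key z₁ z₂ z₃ hz, ?_⟩, ?_⟩
  · have h' := key z₁ z₂ (-z₃) (by nlinarith)
    nlinarith [h']
  · have k1 := key 1 0 0 (by norm_num)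
    have k2 := key 0 1 0 (by norm_num)
    rcases max_cases (c₁^2) (c₂^2) with ⟨h, _⟩ | ⟨h, _⟩ <;> rw [h] <;> nlinarith
end

section
/- Fix real numbers r, s, c₃ and z with |s·z| < 1. Let 0 ≤ θ₁ < θ₂ be real numbers such that r²+2rc₃z+θ₁ ≥ 0, r²−2rc₃z+θ₁ ≥ 0, √(r²+2rc₃z+θ₂) < 1+sz, and √(r²−2rc₃z+θ₂) < 1−sz. Then G(θ₁, z) < G(θ₂, z); that is, θ ↦ G(θ, z) is strictly increasing on the admissible range of θ. -/
/-- The two-variable function `G(θ, z)` from the quantum discord of X-states,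
with parameters `r, s, c₃`.  Terms `x·log₂x` vanish automatically when `x = 0`
since the logarithm is multiplied by the zero factor. -/
noncomputable def G (r s c₃ θ z : ℝ) : ℝ :=
  let hp := Real.sqrt (r^2 + 2*r*c₃*z + θ)
  let hm := Real.sqrt (r^2 - 2*r*c₃*z + θ)
  (1/4) * (1 + s*z + hp) * Real.logb 2 ((1 + s*z + hp) / (1 + s*z)) +
  (1/4) * (1 + s*z - hp) * Real.logb 2 ((1 + s*z - hp) / (1 + s*z)) +
  (1/4) * (1 - s*z + hm) * Real.logb 2 ((1 - s*z + hm) / (1 - s*z)) +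
  (1/4) * (1 - s*z - hm) * Real.logb 2 ((1 - s*z - hm) / (1 - s*z))

private lemma phi_strictMonoOn (a : ℝ) (ha : 0 < a) :
    StrictMonoOn (fun x : ℝ => (a+x)*Real.log (a+x) + (a-x)*Real.log (a-x))
      (Set.Ico 0 a) := by
  apply strictMonoOn_of_deriv_pos (convex_Ico 0 a)
  · apply ContinuousOn.add
    · exact (continuousOn_const.add continuousOn_id).mul
        ((continuousOn_const.add continuousOn_id).log
          (fun x hx => by simp only [Pi.add_apply, id_eq]; have := hx.1; intro h; linarith))
    · exact (continuousOn_const.sub continuousOn_id).mul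
        ((continuousOn_const.sub continuousOn_id).log
          (fun x hx => by simp only [Pi.sub_apply, id_eq]; have := hx.2; intro h; linarith))
  · intro x hx
    rw [interior_Ico] at hx
    obtain ⟨hx0, hxa⟩ := hx
    have hap : 0 < a + x := by linarith
    have ham : 0 < a - x := by linarith
    have d1 : HasDerivAt (fun x : ℝ => (a+x)*Real.log (a+x))
        (1 * Real.log (a+x) + (a+x) * (1/(a+x))) x := by
      have h1 : HasDerivAt (fun x : ℝ => a + x) 1 x := (hasDerivAt_id x).const_add a
      exact h1.mul (((Real.hasDerivAt_log hap.ne').comp x h1).congr_deriv (by ring))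
    have d2 : HasDerivAt (fun x : ℝ => (a-x)*Real.log (a-x))
        ((-1) * Real.log (a-x) + (a-x) * (-1/(a-x))) x := by
      have h1 : HasDerivAt (fun x : ℝ => a - x) (-1) x := by
        simpa using ((hasDerivAt_id x).const_sub a)
      exact h1.mul (((Real.hasDerivAt_log ham.ne').comp x h1).congr_deriv (by ring))
    have d : HasDerivAt (fun x : ℝ => (a+x)*Real.log (a+x) + (a-x)*Real.log (a-x))
        (Real.log (a+x) - Real.log (a-x)) x := by
      have := d1.add d2
      convert this using 1
      · rfl
      · rfl
      · rfl
      rw [mul_one_div_cancel hap.ne', mul_div_assoc', mul_neg_one, neg_div, div_self ham.ne']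
      ring
    rw [d.deriv]
    have : Real.log (a-x) < Real.log (a+x) := Real.log_lt_log ham (by linarith)
    linarith

private lemma pair_lt (a : ℝ) (ha : 0 < a) (h₁ h₂ : ℝ) (hh0 : 0 ≤ h₁)
    (hlt : h₁ < h₂) (hha : h₂ < a) :
    (a+h₁)*Real.logb 2 ((a+h₁)/a) + (a-h₁)*Real.logb 2 ((a-h₁)/a)
    < (a+h₂)*Real.logb 2 ((a+h₂)/a) + (a-h₂)*Real.logb 2 ((a-h₂)/a) := by
  have key : (a+h₁)*Real.log (a+h₁) + (a-h₁)*Real.log (a-h₁)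
      < (a+h₂)*Real.log (a+h₂) + (a-h₂)*Real.log (a-h₂) :=
    phi_strictMonoOn a ha ⟨hh0, by linarith⟩ ⟨by linarith, hha⟩ hlt
  have hlog2 : (0:ℝ) < Real.log 2 := Real.log_pos (by norm_num)
  have conv : ∀ h : ℝ, 0 ≤ h → h < a →
      (a+h)*Real.logb 2 ((a+h)/a) + (a-h)*Real.logb 2 ((a-h)/a)
      = ((a+h)*Real.log (a+h) + (a-h)*Real.log (a-h) - 2*a*Real.log a) / Real.log 2 := by
    intro h hh0 hha
    rw [Real.logb, Real.logb, Real.log_div (by linarith) ha.ne',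
      Real.log_div (by linarith) ha.ne']
    field_simp
    ring
  rw [conv h₁ hh0 (by linarith), conv h₂ (by linarith) hha]
  exact div_lt_div_of_pos_right (by linarith) hlog2

theorem G_strictMono_in_theta (r s c₃ z : ℝ) (hsz : |s*z| < 1)
    (θ₁ θ₂ : ℝ) (h0 : 0 ≤ θ₁) (h12 : θ₁ < θ₂)
    (hp1 : r^2 + 2*r*c₃*z + θ₁ ≥ 0)
    (hm1 : r^2 - 2*r*c₃*z + θ₁ ≥ 0)
    (hp2 : Real.sqrt (r^2 + 2*r*c₃*z + θ₂) < 1 + s*z)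
    (hm2 : Real.sqrt (r^2 - 2*r*c₃*z + θ₂) < 1 - s*z) :
    G r s c₃ θ₁ z < G r s c₃ θ₂ z := by
  obtain ⟨hsz1, hsz2⟩ := abs_lt.mp hsz
  have hap : (0:ℝ) < 1 + s*z := by linarith
  have ham : (0:ℝ) < 1 - s*z := by linarith
  have hsp : Real.sqrt (r^2 + 2*r*c₃*z + θ₁) < Real.sqrt (r^2 + 2*r*c₃*z + θ₂) :=
    Real.sqrt_lt_sqrt hp1 (by linarith)
  have hsm : Real.sqrt (r^2 - 2*r*c₃*z + θ₁) < Real.sqrt (r^2 - 2*r*c₃*z + θ₂) :=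
    Real.sqrt_lt_sqrt hm1 (by linarith)
  have keyp := pair_lt (1 + s*z) hap _ _ (Real.sqrt_nonneg _) hsp hp2
  have keym := pair_lt (1 - s*z) ham _ _ (Real.sqrt_nonneg _) hsm hm2
  unfold G
  dsimp only
  nlinarith [keyp, keym]
end

section
/- Let r, s, c₁, c₂, c₃ be real numbers with |s| < 1, set c = max(|c₁|, |c₂|), and assume that for all z₁, z₂, z₃ with z₁²+z₂²+z₃² = 1 one has √(r²+2rc₃z₃+(c₁z₁)²+(c₂z₂)²+(c₃z₃)²) ≤ 1+sz₃ and √(r²−2rc₃z₃+(c₁z₁)²+(c₂z₂)²+(c₃z₃)²) ≤ 1−sz₃. Then the supremum of G((c₁z₁)²+(c₂z₂)²+(c₃z₃)², z₃) over all (z₁, z₂, z₃) with z₁²+z₂²+z₃² = 1 equals the supremum over z ∈ [0, 1] of F(z) := G(c²+(c₃²−c²)z², z). -/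
noncomputable def psi (a u : ℝ) : ℝ :=
  (a+u)*Real.log (a+u) + (a-u)*Real.log (a-u) - 2*(a*Real.log a)

lemma psi_le (a u u' : ℝ) (h0 : 0 ≤ u) (huu : u ≤ u') (hua : u' ≤ a) :
    psi a u ≤ psi a u' := by
  unfold psi
  rcases eq_or_lt_of_le (h0.trans huu) with h|h
  · have : u = 0 := by linarith [h0.trans huu]
    subst this; rw [← h]
  · set l : ℝ := (u'+u)/(2*u') with hl
    have hu'ne : (2*u') ≠ 0 := by positivity
    have hl0 : 0 ≤ l := by positivity
    have hl1 : l ≤ 1 := by rw [hl, div_le_one (by positivity)]; linarith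
    have hm0 : 0 ≤ 1 - l := by linarith
    have hsum : l + (1-l) = 1 := by ring
    have hx : a + u' ∈ Set.Ici (0:ℝ) := by simp; linarith
    have hy : a - u' ∈ Set.Ici (0:ℝ) := by simp; linarith
    have h1 := Real.convexOn_mul_log.2 hx hy hl0 hm0 hsum
    have h2 := Real.convexOn_mul_log.2 hx hy hm0 hl0 (by ring)
    have e1 : l • (a+u') + (1-l) • (a-u') = a + u := by
      rw [smul_eq_mul, smul_eq_mul, hl]; field_simp; ring
    have e2 : (1-l) • (a+u') + l • (a-u') = a - u := by
      rw [smul_eq_mul, smul_eq_mul, hl]; field_simp; ring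
    rw [e1] at h1; rw [e2] at h2
    simp only [smul_eq_mul] at h1 h2
    linarith [h1, h2]

lemma half (a u : ℝ) (ha : 0 < a) (hu : 0 ≤ u) :
    (1/4) * (a + u) * Real.logb 2 ((a + u) / a) +
    (1/4) * (a - u) * Real.logb 2 ((a - u) / a) = psi a u / (4 * Real.log 2) := by
  have hL : Real.log 2 ≠ 0 := (Real.log_pos (by norm_num)).ne'
  simp only [Real.logb, psi]
  rcases eq_or_ne (a - u) 0 with h|h
  · have h2a : a + u = 2 * a := by linarith
    rw [h, h2a, mul_div_assoc, div_self ha.ne', Real.log_mul two_ne_zero ha.ne']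
    simp
    field_simp
    ring
  · rw [Real.log_div (by positivity) ha.ne', Real.log_div h ha.ne']
    field_simp
    ring

lemma psi_cont {a u : ℝ → ℝ} (ha : Continuous a) (hu : Continuous u) :
    Continuous fun z => psi (a z) (u z) := by
  simp only [psi]
  exact ((Real.continuous_mul_log.comp (ha.add hu)).add
    (Real.continuous_mul_log.comp (ha.sub hu))).sub
    (continuous_const.mul (Real.continuous_mul_log.comp ha))

lemma Gval (r s c₃ θ z : ℝ) (ha : 0 < 1 + s*z) (hb : 0 < 1 - s*z) :
    G r s c₃ θ z =
      (psi (1 + s*z) (Real.sqrt (r^2 + 2*r*c₃*z + θ)) +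
       psi (1 - s*z) (Real.sqrt (r^2 - 2*r*c₃*z + θ))) / (4 * Real.log 2) := by
  simp only [G]
  have h1 := half (1 + s*z) (Real.sqrt (r^2 + 2*r*c₃*z + θ)) ha (Real.sqrt_nonneg _)
  have h2 := half (1 - s*z) (Real.sqrt (r^2 - 2*r*c₃*z + θ)) hb (Real.sqrt_nonneg _)
  have h3 : (psi (1 + s*z) (Real.sqrt (r^2 + 2*r*c₃*z + θ)) +
       psi (1 - s*z) (Real.sqrt (r^2 - 2*r*c₃*z + θ))) / (4 * Real.log 2) =
      psi (1 + s*z) (Real.sqrt (r^2 + 2*r*c₃*z + θ)) / (4 * Real.log 2) +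
      psi (1 - s*z) (Real.sqrt (r^2 - 2*r*c₃*z + θ)) / (4 * Real.log 2) := add_div _ _ _
  linarith [h1, h2, h3]

lemma G_neg (r s c₃ θ z : ℝ) : G r s c₃ θ (-z) = G r s c₃ θ z := by
  simp only [G]
  rw [show r^2 + 2*r*c₃*(-z) + θ = r^2 - 2*r*c₃*z + θ from by ring,
      show r^2 - 2*r*c₃*(-z) + θ = r^2 + 2*r*c₃*z + θ from by ring,
      show (1:ℝ) + s*(-z) = 1 - s*z from by ring,
      show (1:ℝ) - s*(-z) = 1 + s*z from by ring]
  ring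

lemma G_mono (r s c₃ z θ θ' : ℝ) (ha : 0 < 1 + s*z) (hb : 0 < 1 - s*z)
    (hθ : θ ≤ θ')
    (h1 : Real.sqrt (r^2 + 2*r*c₃*z + θ') ≤ 1 + s*z)
    (h2 : Real.sqrt (r^2 - 2*r*c₃*z + θ') ≤ 1 - s*z) :
    G r s c₃ θ z ≤ G r s c₃ θ' z := by
  rw [Gval r s c₃ θ z ha hb, Gval r s c₃ θ' z ha hb]
  have hL : (0:ℝ) < 4 * Real.log 2 := by positivity
  have key1 : psi (1 + s*z) (Real.sqrt (r^2 + 2*r*c₃*z + θ)) ≤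
      psi (1 + s*z) (Real.sqrt (r^2 + 2*r*c₃*z + θ')) :=
    psi_le _ _ _ (Real.sqrt_nonneg _) (Real.sqrt_le_sqrt (by linarith)) h1
  have key2 : psi (1 - s*z) (Real.sqrt (r^2 - 2*r*c₃*z + θ)) ≤
      psi (1 - s*z) (Real.sqrt (r^2 - 2*r*c₃*z + θ')) :=
    psi_le _ _ _ (Real.sqrt_nonneg _) (Real.sqrt_le_sqrt (by linarith)) h2
  gcongr

theorem sup_G_sphere_eq_sup_F (r s c₁ c₂ c₃ c : ℝ) (hs : |s| < 1)
    (hc : c = max |c₁| |c₂|)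
    (hpos : ∀ z₁ z₂ z₃ : ℝ, z₁^2 + z₂^2 + z₃^2 = 1 →
      Real.sqrt (r^2 + 2*r*c₃*z₃ + (c₁*z₁)^2 + (c₂*z₂)^2 + (c₃*z₃)^2) ≤ 1 + s*z₃ ∧
      Real.sqrt (r^2 - 2*r*c₃*z₃ + (c₁*z₁)^2 + (c₂*z₂)^2 + (c₃*z₃)^2) ≤ 1 - s*z₃) :
    sSup {x : ℝ | ∃ z₁ z₂ z₃ : ℝ, z₁^2 + z₂^2 + z₃^2 = 1 ∧
        x = G r s c₃ ((c₁*z₁)^2 + (c₂*z₂)^2 + (c₃*z₃)^2) z₃} =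
    sSup ((fun z => G r s c₃ (c^2 + (c₃^2 - c^2) * z^2) z) '' Set.Icc (0 : ℝ) 1) := by
  have habs : ∀ z : ℝ, |z| ≤ 1 → 0 < 1 + s*z ∧ 0 < 1 - s*z := by
    intro z hz
    have h1 : |s*z| < 1 := by
      rw [abs_mul]
      calc (|s|) * (|z|) ≤ (|s|) * 1 := mul_le_mul_of_nonneg_left hz (abs_nonneg s)
        _ = (|s|) := mul_one _
        _ < 1 := hs
    have := abs_lt.mp h1
    constructor <;> linarith [this.1, this.2]
  have hc1 : c₁^2 ≤ c^2 := by
    rw [hc]; nlinarith [sq_abs c₁, le_max_left (|c₁|) (|c₂|), abs_nonneg c₁]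
  have hc2 : c₂^2 ≤ c^2 := by
    rw [hc]; nlinarith [sq_abs c₂, le_max_right (|c₁|) (|c₂|), abs_nonneg c₂]
  -- construction of extremal points
  have extr : ∀ z : ℝ, 0 ≤ z → z ≤ 1 → ∃ w₁ w₂ : ℝ,
      w₁^2 + w₂^2 + z^2 = 1 ∧
      (c₁*w₁)^2 + (c₂*w₂)^2 + (c₃*z)^2 = c^2 + (c₃^2 - c^2) * z^2 := by
    intro z h0 h1
    have hz2 : 0 ≤ 1 - z^2 := by nlinarith
    rcases le_total |c₂| |c₁| with hm|hm
    · have hcc : c^2 = c₁^2 := by rw [hc, max_eq_left hm, sq_abs]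
      exact ⟨Real.sqrt (1-z^2), 0, by rw [Real.sq_sqrt hz2]; ring,
        by rw [mul_pow, Real.sq_sqrt hz2, hcc]; ring⟩
    · have hcc : c^2 = c₂^2 := by rw [hc, max_eq_right hm, sq_abs]
      exact ⟨0, Real.sqrt (1-z^2), by rw [Real.sq_sqrt hz2]; ring,
        by rw [mul_pow, mul_pow, Real.sq_sqrt hz2, hcc]; ring⟩
  -- sqrt bounds at the extremal θ
  have bound : ∀ z : ℝ, 0 ≤ z → z ≤ 1 →
      Real.sqrt (r^2 + 2*r*c₃*z + (c^2 + (c₃^2 - c^2) * z^2)) ≤ 1 + s*z ∧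
      Real.sqrt (r^2 - 2*r*c₃*z + (c^2 + (c₃^2 - c^2) * z^2)) ≤ 1 - s*z := by
    intro z h0 h1
    obtain ⟨w₁, w₂, hw, hθ⟩ := extr z h0 h1
    have hp := hpos w₁ w₂ z hw
    constructor
    · have := hp.1
      rwa [show r^2 + 2*r*c₃*z + (c₁*w₁)^2 + (c₂*w₂)^2 + (c₃*z)^2
          = r^2 + 2*r*c₃*z + (c^2 + (c₃^2 - c^2) * z^2) from by linarith] at this
    · have := hp.2
      rwa [show r^2 - 2*r*c₃*z + (c₁*w₁)^2 + (c₂*w₂)^2 + (c₃*z)^2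
          = r^2 - 2*r*c₃*z + (c^2 + (c₃^2 - c^2) * z^2) from by linarith] at this
  -- key pointwise bound
  have key : ∀ z₁ z₂ z₃ : ℝ, z₁^2 + z₂^2 + z₃^2 = 1 →
      G r s c₃ ((c₁*z₁)^2 + (c₂*z₂)^2 + (c₃*z₃)^2) z₃ ≤
      G r s c₃ (c^2 + (c₃^2 - c^2) * |z₃|^2) |z₃| := by
    intro z₁ z₂ z₃ hz
    have hz3 : |z₃| ≤ 1 := by
      nlinarith [sq_abs z₃, sq_nonneg z₁, sq_nonneg z₂, abs_nonneg z₃]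
    obtain ⟨ha, hb⟩ := habs |z₃| (by rwa [abs_abs])
    have e1 : G r s c₃ ((c₁*z₁)^2 + (c₂*z₂)^2 + (c₃*z₃)^2) z₃ =
        G r s c₃ ((c₁*z₁)^2 + (c₂*z₂)^2 + (c₃*z₃)^2) |z₃| := by
      rcases le_or_gt 0 z₃ with h|h
      · rw [abs_of_nonneg h]
      · rw [abs_of_neg h]; exact (G_neg r s c₃ _ z₃).symm
    have hθ : (c₁*z₁)^2 + (c₂*z₂)^2 + (c₃*z₃)^2 ≤ c^2 + (c₃^2 - c^2) * |z₃|^2 := by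
      nlinarith [mul_le_mul_of_nonneg_right hc1 (sq_nonneg z₁),
        mul_le_mul_of_nonneg_right hc2 (sq_nonneg z₂), sq_abs z₃]
    obtain ⟨hb1, hb2⟩ := bound |z₃| (abs_nonneg _) hz3
    rw [e1]
    exact G_mono r s c₃ |z₃| _ _ ha hb hθ hb1 hb2
  set A := {x : ℝ | ∃ z₁ z₂ z₃ : ℝ, z₁^2 + z₂^2 + z₃^2 = 1 ∧
      x = G r s c₃ ((c₁*z₁)^2 + (c₂*z₂)^2 + (c₃*z₃)^2) z₃} with hA
  set B := ((fun z => G r s c₃ (c^2 + (c₃^2 - c^2) * z^2) z) '' Set.Icc (0 : ℝ) 1) with hB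
  -- B is bounded above, via continuity on a compact set
  have hcontE : Continuous (fun z : ℝ =>
      (psi (1 + s*z) (Real.sqrt (r^2 + 2*r*c₃*z + (c^2 + (c₃^2 - c^2) * z^2))) +
       psi (1 - s*z) (Real.sqrt (r^2 - 2*r*c₃*z + (c^2 + (c₃^2 - c^2) * z^2)))) /
        (4 * Real.log 2)) := by
    apply Continuous.div_const
    exact (psi_cont (by fun_prop) (Real.continuous_sqrt.comp (by fun_prop))).add
      (psi_cont (by fun_prop) (Real.continuous_sqrt.comp (by fun_prop)))
  have hFeq : Set.EqOn (fun z => G r s c₃ (c^2 + (c₃^2 - c^2) * z^2) z)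
      (fun z : ℝ =>
      (psi (1 + s*z) (Real.sqrt (r^2 + 2*r*c₃*z + (c^2 + (c₃^2 - c^2) * z^2))) +
       psi (1 - s*z) (Real.sqrt (r^2 - 2*r*c₃*z + (c^2 + (c₃^2 - c^2) * z^2)))) /
        (4 * Real.log 2)) (Set.Icc 0 1) := by
    intro z hz
    obtain ⟨ha, hb⟩ := habs z (by rw [abs_of_nonneg hz.1]; exact hz.2)
    exact Gval r s c₃ _ z ha hb
  have hcontF : ContinuousOn (fun z => G r s c₃ (c^2 + (c₃^2 - c^2) * z^2) z)
      (Set.Icc (0:ℝ) 1) := hcontE.continuousOn.congr hFeq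
  have hBbdd : BddAbove B := (isCompact_Icc.image_of_continuousOn hcontF).bddAbove
  have hBne : B.Nonempty := ⟨_, Set.mem_image_of_mem _ (by constructor <;> norm_num : (0:ℝ) ∈ Set.Icc (0:ℝ) 1)⟩
  have hBA : B ⊆ A := by
    rintro x ⟨z, hz, rfl⟩
    obtain ⟨w₁, w₂, hw, hθ⟩ := extr z hz.1 hz.2
    exact ⟨w₁, w₂, z, hw, by rw [hθ]⟩
  have hAne : A.Nonempty := hBne.mono hBA
  have hub : ∀ x ∈ A, x ≤ sSup B := by
    rintro x ⟨z₁, z₂, z₃, hz, rfl⟩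
    have hz3 : |z₃| ≤ 1 := by
      nlinarith [sq_abs z₃, sq_nonneg z₁, sq_nonneg z₂, abs_nonneg z₃]
    have hmem : G r s c₃ (c^2 + (c₃^2 - c^2) * |z₃|^2) |z₃| ∈ B :=
      ⟨|z₃|, ⟨abs_nonneg _, hz3⟩, rfl⟩
    exact (key z₁ z₂ z₃ hz).trans (le_csSup hBbdd hmem)
  apply le_antisymm
  · exact csSup_le hAne hub
  · exact csSup_le_csSup ⟨sSup B, hub⟩ hBne hBA
end

section
/- The function g(x) = (1/x)·log₂((1+x)/(1−x)) is strictly increasing on the open interval (0, 1). -/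
lemma g_key {x : ℝ} (h0 : 0 < x) (h1 : x < 1) :
    Real.log ((1+x)/(1-x)) < 2*x/(1-x^2) := by
  have hx1 : (0:ℝ) < 1 - x := by linarith
  have hx2 : (0:ℝ) < 1 + x := by linarith
  have ht : 1 < (1+x)/(1-x) := by
    rw [lt_div_iff₀ hx1]; linarith
  have htpos : (0:ℝ) < (1+x)/(1-x) := by positivity
  have hlogpos : 0 < Real.log ((1+x)/(1-x)) := Real.log_pos ht
  have hs : Real.log ((1+x)/(1-x)) < Real.sinh (Real.log ((1+x)/(1-x))) :=
    Real.self_lt_sinh_iff.mpr hlogpos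
  rw [Real.sinh_log htpos] at hs
  have hne : (1:ℝ) - x^2 ≠ 0 := by nlinarith
  have heq : ((1+x)/(1-x) - ((1+x)/(1-x))⁻¹)/2 = 2*x/(1-x^2) := by
    rw [inv_div]
    field_simp
    ring
  linarith [heq ▸ hs]

lemma g_hasDeriv {x : ℝ} (h0 : 0 < x) (h1 : x < 1) :
    HasDerivAt (fun x : ℝ => (1/x) * Real.logb 2 ((1+x)/(1-x)))
      ((2*x/(1-x^2) - Real.log ((1+x)/(1-x))) / x^2 / Real.log 2) x := by
  have hx1 : (1:ℝ) - x ≠ 0 := by linarith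
  have hx2 : (0:ℝ) < 1 + x := by linarith
  have hq : (1+x)/(1-x) ≠ 0 := by positivity
  have hA : HasDerivAt (fun x : ℝ => 1+x) 1 x := by
    simpa using (hasDerivAt_id x).const_add 1
  have hB : HasDerivAt (fun x : ℝ => 1-x) (-1) x := by
    simpa using (hasDerivAt_id x).const_sub 1
  have hQ := hA.div hB hx1
  have hL := hQ.log hq
  have hInv : HasDerivAt (fun x : ℝ => 1/x) (-(x^2)⁻¹) x := by
    simpa [one_div] using hasDerivAt_inv h0.ne'
  have hM := hInv.mul (hL.div_const (Real.log 2))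
  have hfun : (fun x : ℝ => (1/x) * Real.logb 2 ((1+x)/(1-x)))
      = fun x : ℝ => (1/x) * (Real.log ((1+x)/(1-x)) / Real.log 2) := by
    funext y; rw [Real.log_div_log]
  rw [hfun]
  refine hM.congr_deriv ?_
  have hlog2 : Real.log 2 ≠ 0 := by
    have := Real.log_pos (by norm_num : (1:ℝ) < 2); linarith
  have hne : (1:ℝ) - x^2 ≠ 0 := by nlinarith
  have h1x : (1:ℝ) + x ≠ 0 := by linarith
  simp only [Pi.div_apply]
  field_simp
  ring

theorem g_strictMonoOn :
    StrictMonoOn (fun x : ℝ => (1/x) * Real.logb 2 ((1+x)/(1-x))) (Set.Ioo (0:ℝ) 1) := by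
  apply strictMonoOn_of_deriv_pos (convex_Ioo 0 1)
  · intro x hx
    exact (g_hasDeriv hx.1 hx.2).continuousAt.continuousWithinAt
  · intro x hx
    rw [interior_Ioo] at hx
    rw [(g_hasDeriv hx.1 hx.2).deriv]
    have hkey := g_key hx.1 hx.2
    have hlog2 : 0 < Real.log 2 := Real.log_pos (by norm_num)
    have hx2 : (0:ℝ) < x^2 := pow_pos hx.1 2
    exact div_pos (div_pos (by linarith) hx2) hlog2
end
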